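/- Let Z be a multiaffine real polynomial with positive coefficients such that for every triple of distinct indices e,f,g and every real assignment of the other variables, the discriminant of ΔZ{e,f} with respect to y_g is nonpositive. If in addition ΔZ{e,f} ≥ 0 everywhere on ℝ^m for one fixed pair {e,f}, and the leading and constant coefficients ΔZ_g{e,g'} and ΔZ^g{e,g'} are nonnegative for all relevant pairs by induction, then ΔZ{e,g} ≥ 0 everywhere for every g ≠ e. (Propagation step of Theorem 3.) -/

import Mathlib

open MvPolynomial

/-- The deletion `Z^e`: the polynomial `Z` with `y_e` set to `0`. -/
noncomputable def del {m : ℕ} (e : Fin m) (Z : MvPolynomial (Fin m) ℝ) : MvPolynomial (Fin m) ℝ :=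
  aeval (fun i => if i = e then (0 : MvPolynomial (Fin m) ℝ) else X i) Z

/-- Multiaffine: every variable occurs to at most the first power. -/
def Multiaffine {m : ℕ} (Z : MvPolynomial (Fin m) ℝ) : Prop :=
  ∀ e : Fin m, Z.degreeOf e ≤ 1

/-- The Rayleigh difference `ΔZ{e,f} = Z_e Z_f - Z_{ef} Z`. -/
noncomputable def Ray {m : ℕ} (e f : Fin m) (Z : MvPolynomial (Fin m) ℝ) : MvPolynomial (Fin m) ℝ :=
  pderiv e Z * pderiv f Z - pderiv f (pderiv e Z) * Z

/-- The discriminant `B² - 4AC` of `ΔZ{e,f}` regarded as a quadratic in `y_g`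
(for `Z` multiaffine). -/
noncomputable def disc {m : ℕ} (Z : MvPolynomial (Fin m) ℝ) (e f g : Fin m) :
    MvPolynomial (Fin m) ℝ :=
  (del f (del g (pderiv e Z)) * del e (pderiv f (pderiv g Z))
    + del e (del g (pderiv f Z)) * del f (pderiv e (pderiv g Z))
    - del e (del f (pderiv g Z)) * del g (pderiv e (pderiv f Z))
    - pderiv e (pderiv f (pderiv g Z)) * del e (del f (del g Z))) ^ 2
  - 4 * Ray e f (pderiv g Z) * Ray e f (del g Z)

namespace Aux

variable {m : ℕ}

lemma eval_del (e : Fin m) (P : MvPolynomial (Fin m) ℝ) (y : Fin m → ℝ) :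
    eval y (del e P) = eval (Function.update y e 0) P := by
  unfold del
  rw [aeval_def, eval_eval₂]
  have h1 : ((eval y).comp (algebraMap ℝ (MvPolynomial (Fin m) ℝ))) = RingHom.id ℝ := by
    ext r; simp
  have h2 : (fun s => (eval y) (if s = e then (0 : MvPolynomial (Fin m) ℝ) else X s))
      = Function.update y e 0 := by
    funext s
    by_cases h : s = e <;> simp [h, Function.update_apply]
  rw [h1, eval₂_id, h2]

lemma del_monomial (e : Fin m) (d : Fin m →₀ ℕ) (c : ℝ) :
    del e (monomial d c) = if d e = 0 then monomial d c else 0 := by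
  unfold del
  rw [aeval_monomial]
  split_ifs with h
  · have h2 : (d.prod fun n k => (if n = e then (0 : MvPolynomial (Fin m) ℝ) else X n) ^ k)
        = d.prod fun n k => (X n : MvPolynomial (Fin m) ℝ) ^ k := by
      apply Finsupp.prod_congr
      intro n hn
      have hne : n ≠ e := by rintro rfl; exact (Finsupp.mem_support_iff.mp hn) h
      simp [hne]
    rw [h2, monomial_eq]
    rfl
  · have he : e ∈ d.support := Finsupp.mem_support_iff.mpr h
    rw [Finsupp.prod, Finset.prod_eq_zero he (by simp [zero_pow h])]
    simp

lemma degreeOf_pderiv_le (i j : Fin m) (P : MvPolynomial (Fin m) ℝ) :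
    degreeOf i (pderiv j P) ≤ degreeOf i P := by
  conv_lhs => rw [P.as_sum]
  rw [map_sum]
  refine le_trans (degreeOf_sum_le _ _ _) ?_
  apply Finset.sup_le
  intro d hd
  rw [pderiv_monomial]
  refine le_trans ?_ (monomial_le_degreeOf i hd)
  by_cases hc : coeff d P * (d j) = 0
  · simp [hc]
  · rw [degreeOf_monomial_eq _ _ hc]
    simp only [Finsupp.tsub_apply]
    exact Nat.sub_le _ _

lemma degreeOf_pderiv_self_le (i : Fin m) (P : MvPolynomial (Fin m) ℝ) {d : ℕ}
    (h : degreeOf i P ≤ d + 1) : degreeOf i (pderiv i P) ≤ d := by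
  conv_lhs => rw [P.as_sum]
  rw [map_sum]
  refine le_trans (degreeOf_sum_le _ _ _) ?_
  apply Finset.sup_le
  intro v hv
  rw [pderiv_monomial]
  by_cases hc : coeff v P * (v i) = 0
  · simp [hc]
  · rw [degreeOf_monomial_eq _ _ hc]
    have hvi : v i ≤ d + 1 := degreeOf_le_iff.mp h v hv
    simp only [Finsupp.tsub_apply, Finsupp.single_eq_same]
    omega

lemma pderiv_eq_zero_of_degreeOf_eq_zero {i : Fin m} {P : MvPolynomial (Fin m) ℝ}
    (h : degreeOf i P = 0) : pderiv i P = 0 := by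
  conv_lhs => rw [P.as_sum]
  rw [map_sum]
  apply Finset.sum_eq_zero
  intro d hd
  have hdi : d i = 0 := Nat.le_zero.mp (degreeOf_le_iff.mp h.le d hd)
  simp [pderiv_monomial, hdi]

lemma del_sum {ι : Type*} (e : Fin m) (s : Finset ι) (F : ι → MvPolynomial (Fin m) ℝ) :
    del e (∑ x ∈ s, F x) = ∑ x ∈ s, del e (F x) := by
  unfold del; exact map_sum _ _ _

lemma split (f : Fin m) (P : MvPolynomial (Fin m) ℝ) (h : degreeOf f P ≤ 1) :
    P = X f * pderiv f P + del f P := by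
  conv_rhs => rw [P.as_sum]
  rw [map_sum, del_sum, Finset.mul_sum, ← Finset.sum_add_distrib]
  conv_lhs => rw [P.as_sum]
  apply Finset.sum_congr rfl
  intro d hd
  have hdf : d f ≤ 1 := degreeOf_le_iff.mp h d hd
  rw [pderiv_monomial, del_monomial]
  interval_cases hdf' : d f
  · simp
  · rw [if_neg (by omega)]
    have hle : Finsupp.single f 1 ≤ d := by
      rw [Finsupp.single_le_iff]; omega
    rw [X, monomial_mul, add_tsub_cancel_of_le hle]
    simp [hdf']

lemma eval_update_of_degreeOf_zero {f : Fin m} {P : MvPolynomial (Fin m) ℝ}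
    (h : degreeOf f P = 0) (y : Fin m → ℝ) (t : ℝ) :
    eval (Function.update y f t) P = eval (Function.update y f 0) P := by
  have hP : P = del f P := by
    have := split f P (h.le.trans one_pos.le)
    rwa [pderiv_eq_zero_of_degreeOf_eq_zero h, mul_zero, zero_add] at this
  rw [hP, eval_del, eval_del, Function.update_idem, Function.update_idem]

lemma eval_split (f : Fin m) (P : MvPolynomial (Fin m) ℝ) (h : degreeOf f P ≤ 1)
    (y : Fin m → ℝ) (t : ℝ) :
    eval (Function.update y f t) P
      = t * eval (Function.update y f 0) (pderiv f P) + eval (Function.update y f 0) P := by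
  have hd0 : degreeOf f (pderiv f P) = 0 :=
    Nat.le_zero.mp (degreeOf_pderiv_self_le f P (by omega))
  conv_lhs => rw [split f P h]
  rw [map_add, map_mul, eval_X, Function.update_self, eval_del, Function.update_idem,
    eval_update_of_degreeOf_zero hd0]

lemma del_add (f : Fin m) (a b : MvPolynomial (Fin m) ℝ) :
    del f (a + b) = del f a + del f b := by unfold del; simp

lemma del_mul (f : Fin m) (a b : MvPolynomial (Fin m) ℝ) :
    del f (a * b) = del f a * del f b := by unfold del; simp

lemma del_one (f : Fin m) : del f (1 : MvPolynomial (Fin m) ℝ) = 1 := by unfold del; simp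

lemma del_zero (f : Fin m) : del f (0 : MvPolynomial (Fin m) ℝ) = 0 := by unfold del; simp

lemma del_X (f n : Fin m) : del f (X n) = if n = f then 0 else X n := by unfold del; simp

lemma pderiv_del {e f : Fin m} (hef : e ≠ f) (P : MvPolynomial (Fin m) ℝ) :
    pderiv e (del f P) = del f (pderiv e P) := by
  induction P using MvPolynomial.induction_on with
  | C a => unfold del; simp
  | add p q hp hq => rw [del_add, map_add, map_add, hp, hq, del_add]
  | mul_X p n ih =>
    by_cases hn : n = f
    · subst hn
      rw [del_mul, del_X, if_pos rfl, mul_zero, map_zero, pderiv_mul,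
        pderiv_X_of_ne (Ne.symm hef), mul_zero, add_zero, del_mul, del_X, if_pos rfl, mul_zero]
    · rw [del_mul, del_X, if_neg hn, pderiv_mul, pderiv_mul, del_add, del_mul, del_mul, del_X,
        if_neg hn, ih]
      congr 1
      by_cases hne : n = e
      · subst hne; rw [pderiv_X_self, del_one]
      · rw [pderiv_X_of_ne hne, del_zero]

lemma pderiv_comm (e f : Fin m) (P : MvPolynomial (Fin m) ℝ) :
    pderiv e (pderiv f P) = pderiv f (pderiv e P) := by
  induction P using MvPolynomial.induction_on with
  | C a => simp
  | add p q hp hq => simp [hp, hq]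
  | mul_X p n ih =>
    have key : ∀ i j : Fin m, pderiv i (pderiv j (p * X n))
        = pderiv i (pderiv j p) * X n + pderiv j p * pderiv i (X n)
          + pderiv i p * pderiv j (X n) := by
      intro i j
      rw [pderiv_mul, map_add, pderiv_mul]
      congr 1
      by_cases hnj : n = j
      · subst hnj; rw [pderiv_X_self, mul_one, mul_one]
      · rw [pderiv_X_of_ne hnj, mul_zero, mul_zero, map_zero]
    rw [key, key, ih]
    ring

lemma quad_nonneg {A B C t : ℝ} (hA : 0 ≤ A) (hC : 0 ≤ C) (hD : B ^ 2 - 4 * A * C ≤ 0) :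
    0 ≤ A * t ^ 2 + B * t + C := by
  rcases eq_or_lt_of_le hA with h | h
  · have hB : B = 0 := by nlinarith [sq_nonneg B]
    rw [← h, hB]; simpa using hC
  · nlinarith [sq_nonneg (2 * A * t + B)]

end Aux


theorem propagation_step {m : ℕ} (Z : MvPolynomial (Fin m) ℝ)
    (hZ : Multiaffine Z)
    (hpos : ∀ d, Z.coeff d ≠ 0 → 0 < Z.coeff d)
    (hdisc : ∀ e' f' g' : Fin m, e' ≠ f' → e' ≠ g' → f' ≠ g' →
      ∀ y : Fin m → ℝ, eval y (disc Z e' f' g') ≤ 0)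
    (e f : Fin m) (hef : e ≠ f)
    (hΔef : ∀ y : Fin m → ℝ, 0 ≤ eval y (Ray e f Z))
    (hcoeffs : ∀ g g' : Fin m, g ≠ e → g' ≠ e → g ≠ g' →
      (∀ y : Fin m → ℝ, 0 ≤ eval y (Ray e g' (pderiv g Z))) ∧
      (∀ y : Fin m → ℝ, 0 ≤ eval y (Ray e g' (del g Z)))) :
    ∀ g : Fin m, g ≠ e → ∀ y : Fin m → ℝ, 0 ≤ eval y (Ray e g Z) := by
  intro g hge y
  rcases eq_or_ne g f with rfl | hgf
  · exact hΔef y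
  classical
  -- basic degree facts
  have hdfZ : degreeOf f Z ≤ 1 := hZ f
  have hdfe : degreeOf f (pderiv e Z) ≤ 1 := (Aux.degreeOf_pderiv_le f e Z).trans (hZ f)
  have hdfg : degreeOf f (pderiv g Z) ≤ 1 := (Aux.degreeOf_pderiv_le f g Z).trans (hZ f)
  have hdfeg : degreeOf f (pderiv g (pderiv e Z)) ≤ 1 :=
    (Aux.degreeOf_pderiv_le f g _).trans hdfe
  have hde_e : degreeOf e (pderiv e Z) = 0 :=
    Nat.le_zero.mp (Aux.degreeOf_pderiv_self_le e Z (by simpa using hZ e))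
  have hdg_g : degreeOf g (pderiv g Z) = 0 :=
    Nat.le_zero.mp (Aux.degreeOf_pderiv_self_le g Z (by simpa using hZ g))
  have hde_eg : degreeOf e (pderiv g (pderiv e Z)) = 0 :=
    Nat.le_zero.mp ((Aux.degreeOf_pderiv_le e g _).trans_eq hde_e)
  have hdg_eg : degreeOf g (pderiv g (pderiv e Z)) = 0 :=
    Nat.le_zero.mp (Aux.degreeOf_pderiv_self_le g _
      (by simpa using (Aux.degreeOf_pderiv_le g e Z).trans (hZ g)))
  have hpee : pderiv e (pderiv e Z) = 0 := Aux.pderiv_eq_zero_of_degreeOf_eq_zero hde_e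
  have hpgg : pderiv g (pderiv g Z) = 0 := Aux.pderiv_eq_zero_of_degreeOf_eq_zero hdg_g
  have hpgeg : pderiv g (pderiv g (pderiv e Z)) = 0 :=
    Aux.pderiv_eq_zero_of_degreeOf_eq_zero hdg_eg
  -- Ray e g Z does not depend on y_e nor y_g
  have hRaye : pderiv e (Ray e g Z) = 0 := by
    unfold Ray
    rw [map_sub, pderiv_mul, pderiv_mul, hpee, Aux.pderiv_comm e g (pderiv e Z), hpee,
      map_zero, Aux.pderiv_comm e g Z]
    ring
  have hRayg : pderiv g (Ray e g Z) = 0 := by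
    unfold Ray
    rw [map_sub, pderiv_mul, pderiv_mul, hpgg, hpgeg]
    ring
  have hdeg_e_Ray : degreeOf e (Ray e g Z) ≤ 1 := by
    unfold Ray
    refine (degreeOf_sub_le e _ _).trans (max_le ?_ ?_)
    · exact (degreeOf_mul_le _ _ _).trans
        (by rw [hde_e, zero_add]; exact (Aux.degreeOf_pderiv_le e g Z).trans (hZ e))
    · exact (degreeOf_mul_le _ _ _).trans (by rw [hde_eg, zero_add]; exact hZ e)
  have hdeg_g_Ray : degreeOf g (Ray e g Z) ≤ 1 := by
    unfold Ray
    refine (degreeOf_sub_le g _ _).trans (max_le ?_ ?_)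
    · exact (degreeOf_mul_le _ _ _).trans
        (by rw [hdg_g, add_zero]; exact (Aux.degreeOf_pderiv_le g e Z).trans (hZ g))
    · exact (degreeOf_mul_le _ _ _).trans (by rw [hdg_eg, zero_add]; exact hZ g)
  have inv : ∀ (i : Fin m) (P : MvPolynomial (Fin m) ℝ) (x : Fin m → ℝ),
      degreeOf i P ≤ 1 → pderiv i P = 0 → eval (Function.update x i 0) P = eval x P := by
    intro i P x hdeg hpd
    have h := Aux.eval_split i P hdeg x (x i)
    rw [Function.update_eq_self] at h
    rw [h, hpd, map_zero, mul_zero, zero_add]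
  set u := Function.update (Function.update y e 0) g 0 with hu
  set w := Function.update u f 0 with hwdef
  have step1 : eval u (Ray e g Z) = eval y (Ray e g Z) := by
    rw [hu, inv g _ _ hdeg_g_Ray hRayg, inv e _ _ hdeg_e_Ray hRaye]
  -- collapsing updates at w
  have hwf : Function.update w f 0 = w := by rw [hwdef, Function.update_idem]
  have hwe0 : w e = 0 := by
    simp [hwdef, hu, Function.update_apply, hef, (Ne.symm hge : e ≠ g)]
  have hwg0 : w g = 0 := by
    simp [hwdef, hu, Function.update_apply, hgf]
  have hwe : Function.update w e 0 = w := by rw [← hwe0]; exact Function.update_eq_self e w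
  have hwg : Function.update w g 0 = w := by rw [← hwg0]; exact Function.update_eq_self g w
  -- abbreviations
  set ze := eval w (pderiv e Z) with hze
  set zg := eval w (pderiv g Z) with hzg
  set zf := eval w (pderiv f Z) with hzf
  set zef := eval w (pderiv f (pderiv e Z)) with hzef
  set zgf := eval w (pderiv f (pderiv g Z)) with hzgf
  set zeg := eval w (pderiv g (pderiv e Z)) with hzeg
  set zegf := eval w (pderiv f (pderiv g (pderiv e Z))) with hzegf
  set z0 := eval w Z with hz0
  -- the quadratic expansion
  have hq : ∀ t : ℝ, eval (Function.update u f t) (Ray e g Z)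
      = (zef * zgf - zegf * zf) * t ^ 2
        + (zef * zg + ze * zgf - zegf * z0 - zeg * zf) * t
        + (ze * zg - zeg * z0) := by
    intro t
    unfold Ray
    rw [map_sub, map_mul, map_mul,
      Aux.eval_split f Z hdfZ u t, Aux.eval_split f (pderiv e Z) hdfe u t,
      Aux.eval_split f (pderiv g Z) hdfg u t, Aux.eval_split f (pderiv g (pderiv e Z)) hdfeg u t,
      ← hwdef, ← hze, ← hzg, ← hzf, ← hzef, ← hzgf, ← hzeg, ← hzegf, ← hz0]
    ring
  -- identify the leading and constant coefficients
  have hAmatch : eval w (Ray e g (pderiv f Z)) = zef * zgf - zegf * zf := by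
    unfold Ray
    rw [map_sub, map_mul, map_mul, Aux.pderiv_comm e f Z, Aux.pderiv_comm g f Z,
      Aux.pderiv_comm g f (pderiv e Z), ← hzef, ← hzgf, ← hzegf, ← hzf]
  have hCmatch : eval w (Ray e g (del f Z)) = ze * zg - zeg * z0 := by
    unfold Ray
    simp only [Aux.pderiv_del hef, Aux.pderiv_del hgf]
    rw [map_sub, map_mul, map_mul]
    simp only [Aux.eval_del, hwf]
    rfl
  -- the discriminant evaluated at w
  have hDval : eval w (disc Z e g f)
      = (zef * zg + ze * zgf - zegf * z0 - zeg * zf) ^ 2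
        - 4 * eval w (Ray e g (pderiv f Z)) * eval w (Ray e g (del f Z)) := by
    unfold disc
    rw [map_sub, map_mul, map_mul, map_pow, map_sub, map_sub, map_add, map_mul, map_mul,
      map_mul, map_mul, map_ofNat]
    simp only [Aux.eval_del, hwf, hwe, hwg]
    rw [Aux.pderiv_comm g f Z, Aux.pderiv_comm e f Z, Aux.pderiv_comm e f (pderiv g Z),
      Aux.pderiv_comm e g Z, ← hze, ← hzg, ← hzf, ← hzef, ← hzgf, ← hzeg, ← hzegf, ← hz0]
    ring
  -- nonnegativity of the extreme coefficients, nonpositivity of the discriminant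
  have hApos : 0 ≤ zef * zgf - zegf * zf := by
    rw [← hAmatch]
    exact (hcoeffs f g hef.symm hge (Ne.symm hgf)).1 w
  have hCpos : 0 ≤ ze * zg - zeg * z0 := by
    rw [← hCmatch]
    exact (hcoeffs f g hef.symm hge (Ne.symm hgf)).2 w
  have hDneg : (zef * zg + ze * zgf - zegf * z0 - zeg * zf) ^ 2
      - 4 * (zef * zgf - zegf * zf) * (ze * zg - zeg * z0) ≤ 0 := by
    have h := hdisc e g f (Ne.symm hge) hef hgf w
    rw [hDval, hAmatch, hCmatch] at h
    exact h
  -- conclude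
  have hval : eval u (Ray e g Z)
      = (zef * zgf - zegf * zf) * (u f) ^ 2
        + (zef * zg + ze * zgf - zegf * z0 - zeg * zf) * (u f)
        + (ze * zg - zeg * z0) := by
    conv_lhs => rw [← Function.update_eq_self f u]
    exact hq (u f)
  rw [← step1, hval]
  exact Aux.quad_nonneg hApos hCpos hDneg
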